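/- Assume (H0) and d₁, d₂, l > 0, let k be a natural number, and assume hypothesis (H2) at mode k: B_k − C_k < 0. Then the quartic equation ω⁴ + (A_k² − 2·B_k − b₁₁²)·ω² + B_k² − C_k² = 0 has exactly one positive real root, namely ω_k⁺ = √((−A_k² + 2·B_k + b₁₁² + √((A_k² − 2·B_k − b₁₁²)² − 4·(B_k² − C_k²)))/2). -/
import Mathlib


open Real

/-- Δ = M² − 4·K·(a·m + c·p)·(a·r₂ + c·d − c·r₀) with M = a·m + c·p + K·(a·r₂ + c·d). -/
noncomputable def Delta (r₀ r₂ K d a p c m : ℝ) : ℝ :=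
  (a*m + c*p + K*(a*r₂ + c*d))^2 - 4*K*(a*m + c*p)*(a*r₂ + c*d - c*r₀)

/-- The positive equilibrium predator density v⋆. -/
noncomputable def vstar (r₀ r₂ K d a p c m : ℝ) : ℝ :=
  (-(a*m + c*p + K*(a*r₂ + c*d)) + Real.sqrt (Delta r₀ r₂ K d a p c m)) / (2*K*(a*m + c*p))

/-- The positive equilibrium prey density u⋆ = (r₂ + m·v⋆)/c. -/
noncomputable def ustar (r₀ r₂ K d a p c m : ℝ) : ℝ := (r₂ + m * vstar r₀ r₂ K d a p c m) / c

/-- Linearization coefficient a₁₂. -/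
noncomputable def a12 (r₀ r₂ K d a p c m : ℝ) : ℝ :=
  -K*r₀*ustar r₀ r₂ K d a p c m / (1 + K*vstar r₀ r₂ K d a p c m)^2 - p*ustar r₀ r₂ K d a p c m

/-- Linearization coefficient a₂₁. -/
noncomputable def a21 (r₀ r₂ K d a p c m : ℝ) : ℝ := c * vstar r₀ r₂ K d a p c m

/-- Linearization coefficient a₂₂. -/
noncomputable def a22 (r₀ r₂ K d a p c m : ℝ) : ℝ := -m * vstar r₀ r₂ K d a p c m

/-- Linearization coefficient b₁₁. -/
noncomputable def b11 (r₀ r₂ K d a p c m : ℝ) : ℝ := -a * ustar r₀ r₂ K d a p c m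

/-- A_k = (d₁ + d₂)·k²/l² − a₂₂. -/
noncomputable def Ak (r₀ r₂ K d a p c m d₁ d₂ l : ℝ) (k : ℕ) : ℝ :=
  (d₁ + d₂)*(k:ℝ)^2/l^2 - a22 r₀ r₂ K d a p c m

/-- B_k = d₁·d₂·k⁴/l⁴ − a₂₂·d₁·k²/l² − a₁₂·a₂₁. -/
noncomputable def Bk (r₀ r₂ K d a p c m d₁ d₂ l : ℝ) (k : ℕ) : ℝ :=
  d₁*d₂*(k:ℝ)^4/l^4 - a22 r₀ r₂ K d a p c m * d₁*(k:ℝ)^2/l^2 - a12 r₀ r₂ K d a p c m * a21 r₀ r₂ K d a p c m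

/-- C_k = −b₁₁·d₂·k²/l² + a₂₂·b₁₁. -/
noncomputable def Ck (r₀ r₂ K d a p c m d₁ d₂ l : ℝ) (k : ℕ) : ℝ :=
  -(b11 r₀ r₂ K d a p c m)*d₂*(k:ℝ)^2/l^2 + a22 r₀ r₂ K d a p c m * b11 r₀ r₂ K d a p c m

/-- ω_k⁺. -/
noncomputable def omegaP (r₀ r₂ K d a p c m d₁ d₂ l : ℝ) (k : ℕ) : ℝ :=
  Real.sqrt ((-(Ak r₀ r₂ K d a p c m d₁ d₂ l k)^2 + 2*Bk r₀ r₂ K d a p c m d₁ d₂ l k + (b11 r₀ r₂ K d a p c m)^2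
    + Real.sqrt (((Ak r₀ r₂ K d a p c m d₁ d₂ l k)^2 - 2*Bk r₀ r₂ K d a p c m d₁ d₂ l k - (b11 r₀ r₂ K d a p c m)^2)^2
      - 4*((Bk r₀ r₂ K d a p c m d₁ d₂ l k)^2 - (Ck r₀ r₂ K d a p c m d₁ d₂ l k)^2))) / 2)

/-- ω_k⁻. -/
noncomputable def omegaM (r₀ r₂ K d a p c m d₁ d₂ l : ℝ) (k : ℕ) : ℝ :=
  Real.sqrt ((-(Ak r₀ r₂ K d a p c m d₁ d₂ l k)^2 + 2*Bk r₀ r₂ K d a p c m d₁ d₂ l k + (b11 r₀ r₂ K d a p c m)^2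
    - Real.sqrt (((Ak r₀ r₂ K d a p c m d₁ d₂ l k)^2 - 2*Bk r₀ r₂ K d a p c m d₁ d₂ l k - (b11 r₀ r₂ K d a p c m)^2)^2
      - 4*((Bk r₀ r₂ K d a p c m d₁ d₂ l k)^2 - (Ck r₀ r₂ K d a p c m d₁ d₂ l k)^2))) / 2)

private lemma aux_sq (B C : ℝ) (hB : 0 < B) (hC : 0 < C) (h : B - C < 0) : B^2 - C^2 < 0 := by
  nlinarith

private lemma aux_B (x y z q d₁ d₂ : ℝ) (hx : x < 0) (hy : y < 0) (hz : 0 < z)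
    (hd₁ : 0 < d₁) (hd₂ : 0 < d₂) (hq : 0 ≤ q) : 0 < d₁*d₂*q^2 - x*d₁*q - y*z := by
  nlinarith [mul_pos (neg_pos.mpr hy) hz, mul_nonneg (mul_nonneg (neg_nonneg.mpr hx.le) hd₁.le) hq,
    mul_nonneg (mul_nonneg hd₁.le hd₂.le) (mul_nonneg hq hq)]

private lemma aux_C (x b q d₂ : ℝ) (hx : x < 0) (hb : b < 0) (hd₂ : 0 < d₂) (hq : 0 ≤ q) :
    0 < -b*d₂*q + x*b := by
  nlinarith [mul_pos (neg_pos.mpr hx) (neg_pos.mpr hb),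
    mul_nonneg (mul_nonneg (neg_nonneg.mpr hb.le) hd₂.le) hq]

private lemma keylem (P Q x : ℝ) (hQ : Q < 0)
    (hx : x = Real.sqrt ((-P + Real.sqrt (P^2 - 4*Q))/2)) :
    0 < x ∧ x^4 + P*x^2 + Q = 0 ∧ ∀ ω : ℝ, 0 < ω → ω^4 + P*ω^2 + Q = 0 → ω = x := by
  have hE : P^2 < P^2 - 4*Q := by linarith
  have hE0 : 0 ≤ P^2 - 4*Q := le_trans (sq_nonneg P) hE.le
  set s := Real.sqrt (P^2 - 4*Q) with hs
  have hs2 : s^2 = P^2 - 4*Q := Real.sq_sqrt hE0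
  have hsP : |P| < s := by
    have := Real.sqrt_lt_sqrt (sq_nonneg P) hE
    rwa [Real.sqrt_sq_eq_abs] at this
  have h1 : -P < s := (neg_le_abs P).trans_lt hsP
  have h2 : P < s := (le_abs_self P).trans_lt hsP
  have hx0 : 0 < (-P + s)/2 := by linarith
  have hxpos : 0 < x := by rw [hx]; exact Real.sqrt_pos.mpr hx0
  have hxsq : x^2 = (-P + s)/2 := by rw [hx]; exact Real.sq_sqrt hx0.le
  refine ⟨hxpos, ?_, ?_⟩
  · have h4 : x^4 = ((-P + s)/2)^2 := by
      rw [show (4:ℕ) = 2*2 from rfl, pow_mul, hxsq]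
    rw [h4, hxsq]
    linear_combination hs2/4
  · intro ω hω heq
    have hfac : (ω^2 - (-P + s)/2) * (ω^2 - (-P - s)/2) = 0 := by
      linear_combination heq - hs2/4
    rcases mul_eq_zero.mp hfac with h | h
    · have h9 : ω^2 = (-P + s)/2 := by linarith
      rw [hx, ← h9, Real.sqrt_sq hω.le]
    · exfalso
      have h10 : ω^2 = (-P - s)/2 := by linarith
      nlinarith [sq_nonneg ω]

theorem stmt11 (r₀ r₂ K d a p c m d₁ d₂ l : ℝ) (hr₀ : 0 < r₀) (hr₂ : 0 < r₂) (hK : 0 < K) (hd : 0 < d) (ha : 0 < a) (hp : 0 < p) (hc : 0 < c) (hm : 0 < m)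
    (hd₁ : 0 < d₁) (hd₂ : 0 < d₂) (hl : 0 < l)
    (hH0 : a*r₂ + c*d - c*r₀ < 0) (k : ℕ) (hH2 : Bk r₀ r₂ K d a p c m d₁ d₂ l k - Ck r₀ r₂ K d a p c m d₁ d₂ l k < 0) :
    0 < omegaP r₀ r₂ K d a p c m d₁ d₂ l k ∧
    (omegaP r₀ r₂ K d a p c m d₁ d₂ l k)^4 + ((Ak r₀ r₂ K d a p c m d₁ d₂ l k)^2 - 2*Bk r₀ r₂ K d a p c m d₁ d₂ l k - (b11 r₀ r₂ K d a p c m)^2)*(omegaP r₀ r₂ K d a p c m d₁ d₂ l k)^2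
      + (Bk r₀ r₂ K d a p c m d₁ d₂ l k)^2 - (Ck r₀ r₂ K d a p c m d₁ d₂ l k)^2 = 0 ∧
    ∀ ω : ℝ, 0 < ω →
      ω^4 + ((Ak r₀ r₂ K d a p c m d₁ d₂ l k)^2 - 2*Bk r₀ r₂ K d a p c m d₁ d₂ l k - (b11 r₀ r₂ K d a p c m)^2)*ω^2
        + (Bk r₀ r₂ K d a p c m d₁ d₂ l k)^2 - (Ck r₀ r₂ K d a p c m d₁ d₂ l k)^2 = 0 →
      ω = omegaP r₀ r₂ K d a p c m d₁ d₂ l k := by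
  have h1 : 0 < a*m + c*p := by positivity
  have hM : 0 < a*m + c*p + K*(a*r₂ + c*d) := by positivity
  have hΔ : (a*m + c*p + K*(a*r₂ + c*d))^2 < Delta r₀ r₂ K d a p c m := by
    unfold Delta
    nlinarith [mul_pos (mul_pos (by positivity : (0:ℝ) < 4*K) h1) (neg_pos.mpr hH0)]
  have hv : 0 < vstar r₀ r₂ K d a p c m := by
    unfold vstar
    apply div_pos _ (by positivity)
    have hs := Real.sqrt_lt_sqrt (by positivity) hΔ
    rw [Real.sqrt_sq hM.le] at hs
    linarith
  have hu : 0 < ustar r₀ r₂ K d a p c m := by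
    unfold ustar; exact div_pos (by positivity) hc
  have hb : b11 r₀ r₂ K d a p c m < 0 := by
    unfold b11
    have : 0 < a * ustar r₀ r₂ K d a p c m := mul_pos ha hu
    linarith
  have ha22 : a22 r₀ r₂ K d a p c m < 0 := by
    unfold a22
    have : 0 < m * vstar r₀ r₂ K d a p c m := mul_pos hm hv
    linarith
  have ha21 : 0 < a21 r₀ r₂ K d a p c m := by
    unfold a21; positivity
  have ha12 : a12 r₀ r₂ K d a p c m < 0 := by
    unfold a12
    have h2 : 0 < (1 + K*vstar r₀ r₂ K d a p c m)^2 := by positivity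
    have h3 : 0 < K*r₀*ustar r₀ r₂ K d a p c m / (1 + K*vstar r₀ r₂ K d a p c m)^2 :=
      div_pos (by positivity) h2
    have h3' : -K*r₀*ustar r₀ r₂ K d a p c m / (1 + K*vstar r₀ r₂ K d a p c m)^2
        = -(K*r₀*ustar r₀ r₂ K d a p c m / (1 + K*vstar r₀ r₂ K d a p c m)^2) := by ring
    have h4 : 0 < p * ustar r₀ r₂ K d a p c m := mul_pos hp hu
    rw [h3']
    linarith
  have hq : 0 ≤ (k:ℝ)^2/l^2 := by positivity
  have hBval : Bk r₀ r₂ K d a p c m d₁ d₂ l k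
      = d₁*d₂*((k:ℝ)^2/l^2)^2 - a22 r₀ r₂ K d a p c m * d₁ * ((k:ℝ)^2/l^2)
        - a12 r₀ r₂ K d a p c m * a21 r₀ r₂ K d a p c m := by
    unfold Bk; ring
  have hB : 0 < Bk r₀ r₂ K d a p c m d₁ d₂ l k := by
    rw [hBval]
    exact aux_B _ _ _ _ _ _ ha22 ha12 ha21 hd₁ hd₂ hq
  have hCval : Ck r₀ r₂ K d a p c m d₁ d₂ l k
      = -(b11 r₀ r₂ K d a p c m)*d₂*((k:ℝ)^2/l^2) + a22 r₀ r₂ K d a p c m * b11 r₀ r₂ K d a p c m := by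
    unfold Ck; ring
  have hC : 0 < Ck r₀ r₂ K d a p c m d₁ d₂ l k := by
    rw [hCval]
    exact aux_C _ _ _ _ ha22 hb hd₂ hq
  have hQ : (Bk r₀ r₂ K d a p c m d₁ d₂ l k)^2 - (Ck r₀ r₂ K d a p c m d₁ d₂ l k)^2 < 0 :=
    aux_sq _ _ hB hC hH2
  have hxeq : omegaP r₀ r₂ K d a p c m d₁ d₂ l k
      = Real.sqrt ((-((Ak r₀ r₂ K d a p c m d₁ d₂ l k)^2 - 2*Bk r₀ r₂ K d a p c m d₁ d₂ l k - (b11 r₀ r₂ K d a p c m)^2)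
        + Real.sqrt (((Ak r₀ r₂ K d a p c m d₁ d₂ l k)^2 - 2*Bk r₀ r₂ K d a p c m d₁ d₂ l k - (b11 r₀ r₂ K d a p c m)^2)^2
          - 4*((Bk r₀ r₂ K d a p c m d₁ d₂ l k)^2 - (Ck r₀ r₂ K d a p c m d₁ d₂ l k)^2)))/2) := by
    unfold omegaP
    congr 1
    ring
  obtain ⟨hpos, heq, huniq⟩ := keylem
    ((Ak r₀ r₂ K d a p c m d₁ d₂ l k)^2 - 2*Bk r₀ r₂ K d a p c m d₁ d₂ l k - (b11 r₀ r₂ K d a p c m)^2)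
    ((Bk r₀ r₂ K d a p c m d₁ d₂ l k)^2 - (Ck r₀ r₂ K d a p c m d₁ d₂ l k)^2)
    (omegaP r₀ r₂ K d a p c m d₁ d₂ l k) hQ hxeq
  refine ⟨hpos, by linarith [heq], ?_⟩
  intro ω hω hωeq
  exact huniq ω hω (by linarith [hωeq])
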